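/- Let c ≥ 0 and let z be a real number with 0 ≤ z ≤ c. Then z · s(c)·(1 − s(c)) ≤ s(z) − 1/2. -/

import Mathlib

noncomputable def sigmoid (z : ℝ) : ℝ := 1 / (1 + Real.exp (-z))

lemma sigmoid_hasDerivAt (t : ℝ) :
    HasDerivAt sigmoid (sigmoid t * (1 - sigmoid t)) t := by
  have h1 : (0:ℝ) < 1 + Real.exp (-t) := by positivity
  have h : HasDerivAt (fun z : ℝ => 1 + Real.exp (-z)) (-Real.exp (-t)) t := by
    simpa using ((Real.hasDerivAt_exp (-t)).comp t ((hasDerivAt_id t).neg)).const_add 1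
  have h2 := h.inv h1.ne'
  have heq : (fun z : ℝ => (1 + Real.exp (-z))⁻¹) = sigmoid := by
    ext z; simp [sigmoid, one_div]
  change HasDerivAt (fun z : ℝ => (1 + Real.exp (-z))⁻¹) _ t at h2
  rw [heq] at h2
  convert h2 using 1
  have : sigmoid t = (1 + Real.exp (-t))⁻¹ := by simp [sigmoid, one_div]
  rw [this]
  field_simp
  ring

lemma sigmoid_mono : Monotone sigmoid := by
  intro a b hab
  have ha : (0:ℝ) < 1 + Real.exp (-a) := by positivity
  have hb : (0:ℝ) < 1 + Real.exp (-b) := by positivity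
  have : Real.exp (-b) ≤ Real.exp (-a) := Real.exp_le_exp.2 (by linarith)
  simp only [sigmoid]
  apply div_le_div_of_nonneg_left (by norm_num) hb (by linarith)

lemma sigmoid_half_le {x : ℝ} (hx : 0 ≤ x) : 1/2 ≤ sigmoid x := by
  have h1 : Real.exp (-x) ≤ 1 := Real.exp_le_one_iff.2 (by linarith)
  have h2 : (0:ℝ) < 1 + Real.exp (-x) := by positivity
  rw [sigmoid, le_div_iff₀ h2]
  linarith

lemma sigmoid_lt_one (x : ℝ) : sigmoid x ≤ 1 := by
  have h2 : (0:ℝ) < 1 + Real.exp (-x) := by positivity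
  rw [sigmoid, div_le_one h2]
  have := Real.exp_pos (-x)
  linarith

theorem mul_deriv_le_sigmoid_sub_half (c z : ℝ) (hc : 0 ≤ c) (hz0 : 0 ≤ z) (hzc : z ≤ c) :
    z * (sigmoid c * (1 - sigmoid c)) ≤ sigmoid z - 1 / 2 := by
  set D := sigmoid c * (1 - sigmoid c) with hD
  set g : ℝ → ℝ := fun x => sigmoid x - x * D with hg
  have hderiv : ∀ x : ℝ, HasDerivAt g (sigmoid x * (1 - sigmoid x) - D) x := by
    intro x
    exact (sigmoid_hasDerivAt x).sub (hasDerivAt_mul_const D)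
  have hmono : MonotoneOn g (Set.Icc 0 c) := by
    apply monotoneOn_of_deriv_nonneg (convex_Icc 0 c)
    · exact Continuous.continuousOn (by
        have : Continuous sigmoid := by
          apply Continuous.div continuous_const
          · exact continuous_const.add (Real.continuous_exp.comp continuous_neg)
          · intro x; positivity
        fun_prop)
    · intro x hx
      exact (hderiv x).differentiableAt.differentiableWithinAt
    · intro x hx
      rw [(hderiv x).deriv]
      rw [interior_Icc] at hx
      have hx0 : (0:ℝ) ≤ x := le_of_lt hx.1
      have h1 : 1/2 ≤ sigmoid x := sigmoid_half_le hx0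
      have h2 : sigmoid x ≤ sigmoid c := sigmoid_mono hx.2.le
      have h3 : sigmoid c ≤ 1 := sigmoid_lt_one c
      rw [hD]
      nlinarith [(sigmoid c - sigmoid x) * (sigmoid x + sigmoid c - 1)]
  have h0 : g 0 ≤ g z := hmono ⟨le_refl 0, hc⟩ ⟨hz0, hzc⟩ hz0
  have hs0 : sigmoid 0 = 1/2 := by norm_num [sigmoid]
  simp only [hg, hs0, zero_mul, sub_zero] at h0
  linarith
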